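/- If there exists an integer cyclically k-diagonal relative Heffter array H_k(n;k) with n ≥ k+4, then there exists an integer cyclically (k+4)-diagonal relative Heffter array H_{k+4}(n;k+4). -/

import Mathlib

namespace IHextAux

def castF {n : ℕ} (r : Fin n) : ZMod n := ((r : ℕ) : ZMod n)

def vfin {n : ℕ} [NeZero n] (x : ZMod n) : Fin n := ⟨x.val, x.val_lt⟩

def ii {n : ℕ} (x : ZMod n) : ℤ := (x.val : ℤ) + 1

def wv (n M ε : ℕ) (s : ℕ) (x : ZMod n) : ℤ :=
  if s = 0 then (M : ℤ) + ii x
  else if s = 1 then -((M : ℤ) + n + ε + ii (x - 1))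
  else if s = 2 then -((M : ℤ) + 2 * n + 1 + ii x)
  else (M : ℤ) + 3 * n + 1 + ε + ii (x - 1)

def bks (n ε : ℕ) (s : ℕ) : ℕ :=
  if s = 0 then 0 else if s = 1 then n + ε else if s = 2 then 2 * n + 1 else 3 * n + 1 + ε

def argw {n : ℕ} (s : ℕ) (y : ZMod n) : ZMod n := if s = 0 ∨ s = 2 then y else y - 1

def zof {n : ℕ} (d : ZMod n) (k : ℕ) (r c : Fin n) : ZMod n :=
  castF r - castF c - d - (k : ZMod n)

def extB {n : ℕ} (k : ℕ) (d : ZMod n) (M ε : ℕ) (A : Fin n → Fin n → Option ℤ) :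
    Fin n → Fin n → Option ℤ := fun r c =>
  if zof d k r c = ((0:ℕ) : ZMod n) then some (wv n M ε 0 (castF r))
  else if zof d k r c = ((1:ℕ) : ZMod n) then some (wv n M ε 1 (castF r))
  else if zof d k r c = ((2:ℕ) : ZMod n) then some (wv n M ε 2 (castF r))
  else if zof d k r c = ((3:ℕ) : ZMod n) then some (wv n M ε 3 (castF r))
  else A r c

lemma wv_natAbs (n M ε : ℕ) (s : ℕ) (hs : s < 4) (y : ZMod n) :
    (wv n M ε s y).natAbs = M + bks n ε s + ((argw s y).val + 1) := by
  interval_cases s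
  · have h : wv n M ε 0 y = ((M + bks n ε 0 + ((argw 0 y).val + 1) : ℕ) : ℤ) := by
      push_cast [wv, ii, bks, argw]; simp; try ring
    rw [h, Int.natAbs_natCast]
  · have h : wv n M ε 1 y = -((M + bks n ε 1 + ((argw 1 y).val + 1) : ℕ) : ℤ) := by
      push_cast [wv, ii, bks, argw]; simp; try ring
    rw [h, Int.natAbs_neg, Int.natAbs_natCast]
  · have h : wv n M ε 2 y = -((M + bks n ε 2 + ((argw 2 y).val + 1) : ℕ) : ℤ) := by
      push_cast [wv, ii, bks, argw]; simp; try ring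
    rw [h, Int.natAbs_neg, Int.natAbs_natCast]
  · have h : wv n M ε 3 y = ((M + bks n ε 3 + ((argw 3 y).val + 1) : ℕ) : ℤ) := by
      push_cast [wv, ii, bks, argw]; simp; try ring
    rw [h, Int.natAbs_natCast]

lemma card_filter_eq {n : ℕ} [NeZero n] (g : Fin n → ZMod n) (hg : Function.Injective g)
    (S : Finset (ZMod n)) : (Finset.univ.filter fun x => g x ∈ S).card = S.card := by
  have hbij : Function.Bijective g :=
    (Fintype.bijective_iff_injective_and_card g).2 ⟨hg, by simp [ZMod.card]⟩
  have himg : (Finset.univ.filter fun x => g x ∈ S).image g = S := by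
    ext y
    simp only [Finset.mem_image, Finset.mem_filter, Finset.mem_univ, true_and]
    constructor
    · rintro ⟨x, hx, rfl⟩; exact hx
    · intro hy; obtain ⟨x, rfl⟩ := hbij.2 y; exact ⟨x, hy, rfl⟩
  calc (Finset.univ.filter fun x => g x ∈ S).card
      = ((Finset.univ.filter fun x => g x ∈ S).image g).card :=
        (Finset.card_image_of_injective _ hg).symm
    _ = S.card := by rw [himg]

end IHextAux

open IHextAux


/-- Number of filled cells in row `i` of the partially filled array `A`. -/
def rowFilled {m n : ℕ} (A : Fin m → Fin n → Option ℤ) (i : Fin m) : ℕ :=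
  (Finset.univ.filter fun j => (A i j).isSome).card

/-- Number of filled cells in column `j` of the partially filled array `A`. -/
def colFilled {m n : ℕ} (A : Fin m → Fin n → Option ℤ) (j : Fin n) : ℕ :=
  (Finset.univ.filter fun i => (A i j).isSome).card

/-- Sum of the entries of row `i` (empty cells count as `0`). -/
def rowSum {m n : ℕ} (A : Fin m → Fin n → Option ℤ) (i : Fin m) : ℤ :=
  ∑ j, (A i j).getD 0

/-- Sum of the entries of column `j` (empty cells count as `0`). -/
def colSum {m n : ℕ} (A : Fin m → Fin n → Option ℤ) (j : Fin n) : ℤ :=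
  ∑ i, (A i j).getD 0

/-- `A` is a square integer relative Heffter array `H_t(n;k)`, written with
integer entries: each row and each column has exactly `k` filled cells, each
row and column sums to `0` in `ℤ`, every entry `x` satisfies
`1 ≤ |x| ≤ ⌊(2nk+t)/2⌋` with `|x|` not a multiple of `(2nk+t)/t` (i.e. the
class of `x` avoids the subgroup `J` of order `t`), and for every admissible
absolute value exactly one cell contains it (up to sign), so that every class
of `ZMod (2nk+t) \ J` is represented exactly once up to sign. -/
def IsIntHeffter (n k t : ℕ) (A : Fin n → Fin n → Option ℤ) : Prop :=
  (∀ i, rowFilled A i = k) ∧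
  (∀ j, colFilled A j = k) ∧
  (∀ i, rowSum A i = 0) ∧
  (∀ j, colSum A j = 0) ∧
  (∀ i j x, A i j = some x →
    1 ≤ x.natAbs ∧ x.natAbs ≤ (2 * n * k + t) / 2 ∧
      ¬ ((2 * n * k + t) / t ∣ x.natAbs)) ∧
  (∀ x : ℕ, 1 ≤ x → x ≤ (2 * n * k + t) / 2 → ¬ ((2 * n * k + t) / t ∣ x) →
    ∃! p : Fin n × Fin n, A p.1 p.2 = some (x : ℤ) ∨ A p.1 p.2 = some (-(x : ℤ)))

/-- A square partially filled integer array is shiftable if every row and every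
column contains as many positive entries as negative entries. -/
def Shiftable {n : ℕ} (A : Fin n → Fin n → Option ℤ) : Prop :=
  (∀ i : Fin n, (Finset.univ.filter fun j => 0 < (A i j).getD 0).card =
      (Finset.univ.filter fun j => (A i j).getD 0 < 0).card) ∧
  (∀ j : Fin n, (Finset.univ.filter fun i => 0 < (A i j).getD 0).card =
      (Finset.univ.filter fun i => (A i j).getD 0 < 0).card)

/-- `A` is cyclically `k`-diagonal: its filled cells are exactly those of `k`
consecutive cyclic diagonals (cell `(r,c)` lies on diagonal `r - c (mod n)`). -/
def CycDiagonal {n : ℕ} (k : ℕ) (A : Fin n → Fin n → Option ℤ) : Prop :=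
  ∃ d : ZMod n, ∀ r c : Fin n, (A r c).isSome ↔
    ∃ j : ℕ, j < k ∧ ((r : ℕ) : ZMod n) - ((c : ℕ) : ZMod n) = d + (j : ZMod n)

/-- `A` (of size `N` with `s ∣ N`) is cyclically `(s,k)`-diagonal: it is obtained
from a cyclically `k`-diagonal `(N/s) × (N/s)` array by blowing up each cell into
an `s × s` block and then cyclically shifting the columns by some offset. -/
def CycSKDiagonal (s k : ℕ) {N : ℕ} (A : Fin N → Fin N → Option ℤ) : Prop :=
  s ∣ N ∧ ∃ (d : ZMod (N / s)) (off : ℕ), ∀ r c : Fin N, (A r c).isSome ↔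
    ∃ j : ℕ, j < k ∧
      (((r : ℕ) / s : ℕ) : ZMod (N / s)) - (((((c : ℕ) + off) % N) / s : ℕ) : ZMod (N / s))
        = d + (j : ZMod (N / s))

/-- The support of a partially filled integer array: the set of absolute values
of its entries. -/
def suppSet {m n : ℕ} (A : Fin m → Fin n → Option ℤ) : Set ℕ :=
  {a | ∃ i j x, A i j = some x ∧ x.natAbs = a}

/-- The entries of `A` have pairwise distinct absolute values. -/
def DistinctAbs {m n : ℕ} (A : Fin m → Fin n → Option ℤ) : Prop :=
  ∀ i j i' j' x y, A i j = some x → A i' j' = some y →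
    x.natAbs = y.natAbs → (i, j) = (i', j')

/-- The skeleton of a partially filled array: the set of its filled positions. -/
def skel {m n : ℕ} (A : Fin m → Fin n → Option ℤ) : Set (Fin m × Fin n) :=
  {p | (A p.1 p.2).isSome}

/-- an integer cyclically `k`-diagonal `H_k(n;k)` with `n ≥ k+4`
yields an integer cyclically `(k+4)`-diagonal `H_{k+4}(n;k+4)`. -/
theorem intHeffter_ext_diag (n k : ℕ) (hn : k + 4 ≤ n)
    (hex : ∃ A : Fin n → Fin n → Option ℤ, IsIntHeffter n k k A ∧ CycDiagonal k A) :
    ∃ A : Fin n → Fin n → Option ℤ,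
      IsIntHeffter n (k + 4) (k + 4) A ∧ CycDiagonal (k + 4) A := by
  obtain ⟨A, hA, d, hdiag0⟩ := hex
  have h4 : 4 ≤ n := by omega
  haveI : NeZero n := ⟨by omega⟩
  have hdiag : ∀ r c : Fin n, (A r c).isSome ↔
      ∃ j : ℕ, j < k ∧ castF r - castF c = d + (j : ZMod n) := hdiag0
  obtain ⟨M, hMdef⟩ : ∃ M, M = (2 * n * k + k) / 2 := ⟨_, rfl⟩
  obtain ⟨ε, hεdef⟩ : ∃ e, e = k % 2 := ⟨_, rfl⟩
  have hε : ε = 0 ∨ ε = 1 := by omega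
  have hε' : ε ≤ 1 := by omega
  -- basic arithmetic
  have hM : M = (k / 2) * (2 * n + 1) + ε * n := by
    rcases Nat.even_or_odd k with ⟨m, hm⟩ | ⟨m, hm⟩
    · have h1 : 2 * n * k + k = 2 * (m * (2 * n + 1)) := by subst hm; ring
      have h2 : k / 2 = m := by omega
      have h3 : ε = 0 := by omega
      rw [hMdef, h1, h2, h3, Nat.mul_div_cancel_left _ (by norm_num : 0 < 2)]; ring
    · have h1 : 2 * n * k + k = 2 * (m * (2 * n + 1) + n) + 1 := by subst hm; ring
      have h2 : k / 2 = m := by omega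
      have h3 : ε = 1 := by omega
      rw [hMdef, h1, h2, h3]; omega
  have hHn : (2 * n * (k + 4) + (k + 4)) / 2 = M + (4 * n + 2) := by
    have h1 : 2 * n * (k + 4) + (k + 4) = (2 * n * k + k) + (8 * n + 4) := by ring
    rw [h1, hMdef]; omega
  have hPk4 : (2 * n * (k + 4) + (k + 4)) / (k + 4) = 2 * n + 1 := by
    have h1 : 2 * n * (k + 4) + (k + 4) = (k + 4) * (2 * n + 1) := by ring
    rw [h1, Nat.mul_div_cancel_left _ (by omega)]
  have hPk : k ≠ 0 → (2 * n * k + k) / k = 2 * n + 1 := by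
    intro hk
    have h1 : 2 * n * k + k = k * (2 * n + 1) := by ring
    rw [h1, Nat.mul_div_cancel_left _ (Nat.pos_of_ne_zero hk)]
  have hDvd : ∀ t, 1 ≤ t → t ≤ 4 * n + 2 →
      ((2 * n + 1) ∣ (M + t) ↔ (ε * n + t = 2 * n + 1 ∨ ε * n + t = 2 * (2 * n + 1))) := by
    intro t h1 h2
    have hd1 : (2 * n + 1) ∣ (k / 2) * (2 * n + 1) := Dvd.intro_left _ rfl
    rw [hM, add_assoc, Nat.dvd_add_right hd1]
    constructor
    · rintro ⟨q, hq⟩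
      rcases hε with h | h <;> subst h
      all_goals {
        have hq2 : q ≤ 2 := by
          by_contra hh
          have h3 : (2 * n + 1) * 3 ≤ (2 * n + 1) * q := Nat.mul_le_mul_left _ (by omega)
          rw [← hq] at h3
          omega
        interval_cases q <;> omega }
    · rcases hε with h | h <;> subst h <;> rintro (h | h)
      · exact ⟨1, by omega⟩
      · exact ⟨2, by omega⟩
      · exact ⟨1, by omega⟩
      · exact ⟨2, by omega⟩
  have hCov : ∀ t, 1 ≤ t → t ≤ 4 * n + 2 → ε * n + t ≠ 2 * n + 1 →
      ε * n + t ≠ 2 * (2 * n + 1) →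
      ∃ s i, s < 4 ∧ 1 ≤ i ∧ i ≤ n ∧ t = bks n ε s + i := by
    intro t h1 h2 hne1 hne2
    rcases hε with h | h <;> subst h
    · rcases Nat.lt_or_ge t (n + 1) with h' | h'
      · exact ⟨0, t, by omega, by omega, by omega, by simp [bks] <;> omega⟩
      rcases Nat.lt_or_ge t (2 * n + 1) with h' | h'
      · exact ⟨1, t - n, by omega, by omega, by omega, by simp [bks] <;> omega⟩
      rcases Nat.lt_or_ge t (3 * n + 2) with h' | h'
      · exact ⟨2, t - (2 * n + 1), by omega, by omega, by omega, by simp [bks] <;> omega⟩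
      · exact ⟨3, t - (3 * n + 1), by omega, by omega, by omega, by simp [bks] <;> omega⟩
    · rcases Nat.lt_or_ge t (n + 1) with h' | h'
      · exact ⟨0, t, by omega, by omega, by omega, by simp [bks] <;> omega⟩
      rcases Nat.lt_or_ge t (2 * n + 2) with h' | h'
      · exact ⟨1, t - (n + 1), by omega, by omega, by omega, by simp [bks] <;> omega⟩
      rcases Nat.lt_or_ge t (3 * n + 2) with h' | h'
      · exact ⟨2, t - (2 * n + 1), by omega, by omega, by omega, by simp [bks] <;> omega⟩
      · exact ⟨3, t - (3 * n + 2), by omega, by omega, by omega, by simp [bks] <;> omega⟩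
  have hUniq : ∀ s s' i i', s < 4 → s' < 4 → 1 ≤ i → i ≤ n → 1 ≤ i' → i' ≤ n →
      bks n ε s + i = bks n ε s' + i' → s = s' ∧ i = i' := by
    intro s s' i i' hs hs' h1 h2 h3 h4'
    interval_cases s <;> interval_cases s' <;> simp [bks] <;> omega
  -- cast helpers
  have hnc : ∀ a b : ℕ, a < n → b < n → ((a : ZMod n) = (b : ZMod n)) → a = b := by
    intro a b ha hb h
    have h' := congrArg ZMod.val h
    rwa [ZMod.val_natCast_of_lt ha, ZMod.val_natCast_of_lt hb] at h'
  have hcF : ∀ r r' : Fin n, castF r = castF r' → r = r' := by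
    intro r r' h; exact Fin.ext (hnc _ _ r.2 r'.2 h)
  have hvf : ∀ x : ZMod n, castF (vfin x) = x := fun x => ZMod.natCast_rightInverse x
  set B := extB k d M ε A with hBdef
  -- old diagonals are empty on new ones
  have hAnone : ∀ r c : Fin n, (∃ s, s < 4 ∧ zof d k r c = ((s:ℕ) : ZMod n)) →
      A r c = none := by
    intro r c ⟨s, hs, hz⟩
    cases hAc : A r c with
    | none => rfl
    | some x =>
      exfalso
      obtain ⟨j, hj, he⟩ := (hdiag r c).1 (by rw [hAc]; rfl)
      have hz' : ((j : ℕ) : ZMod n) = ((k + s : ℕ) : ZMod n) := by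
        push_cast
        simp only [zof] at hz
        linear_combination hz - he
      have := hnc j (k + s) (by omega) (by omega) hz'
      omega
  have hBs : ∀ (r c : Fin n) (s : ℕ), s < 4 → zof d k r c = ((s:ℕ) : ZMod n) →
      B r c = some (wv n M ε s (castF r)) := by
    intro r c s hs hz
    have hne : ∀ s' : ℕ, s' < 4 → s' ≠ s → zof d k r c ≠ ((s' : ℕ) : ZMod n) := by
      intro s' h1 h2 he
      exact h2 (hnc s' s (by omega) (by omega) (he.symm.trans hz))
    interval_cases s
    · show extB k d M ε A r c = _
      rw [extB, if_pos hz]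
    · show extB k d M ε A r c = _
      rw [extB, if_neg (hne 0 (by omega) (by omega)), if_pos hz]
    · show extB k d M ε A r c = _
      rw [extB, if_neg (hne 0 (by omega) (by omega)), if_neg (hne 1 (by omega) (by omega)),
        if_pos hz]
    · show extB k d M ε A r c = _
      rw [extB, if_neg (hne 0 (by omega) (by omega)), if_neg (hne 1 (by omega) (by omega)),
        if_neg (hne 2 (by omega) (by omega)), if_pos hz]
  have hBA : ∀ r c : Fin n, (∀ s : ℕ, s < 4 → zof d k r c ≠ ((s:ℕ) : ZMod n)) →
      B r c = A r c := by
    intro r c h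
    show extB k d M ε A r c = _
    rw [extB, if_neg (h 0 (by omega)), if_neg (h 1 (by omega)), if_neg (h 2 (by omega)),
      if_neg (h 3 (by omega))]
  -- skeleton
  have hskel : ∀ r c : Fin n, (B r c).isSome ↔
      ∃ j : ℕ, j < k + 4 ∧ castF r - castF c = d + (j : ZMod n) := by
    intro r c
    by_cases h : ∃ s, s < 4 ∧ zof d k r c = ((s:ℕ) : ZMod n)
    · obtain ⟨s, hs, hz⟩ := h
      rw [hBs r c s hs hz]
      simp only [Option.isSome_some, true_iff]
      refine ⟨k + s, by omega, ?_⟩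
      simp only [zof] at hz
      push_cast
      linear_combination hz
    · rw [hBA r c (fun s hs hz => h ⟨s, hs, hz⟩), hdiag r c]
      constructor
      · rintro ⟨j, hj, he⟩; exact ⟨j, by omega, he⟩
      · rintro ⟨j, hj, he⟩
        by_cases hjk : j < k
        · exact ⟨j, hjk, he⟩
        · exfalso
          refine h ⟨j - k, by omega, ?_⟩
          simp only [zof]
          have hcast : ((j - k : ℕ) : ZMod n) = (j : ZMod n) - (k : ZMod n) := by
            push_cast [Nat.cast_sub (by omega : k ≤ j)]; ring
          rw [hcast]
          linear_combination he
  -- pointwise decomposition for sums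
  have hpt : ∀ r c : Fin n, (B r c).getD 0 = (A r c).getD 0 +
      ∑ s ∈ Finset.range 4,
        (if zof d k r c = ((s:ℕ) : ZMod n) then wv n M ε s (castF r) else 0) := by
    intro r c
    by_cases h : ∃ s, s < 4 ∧ zof d k r c = ((s:ℕ) : ZMod n)
    · obtain ⟨s, hs, hz⟩ := h
      rw [hBs r c s hs hz, hAnone r c ⟨s, hs, hz⟩]
      simp only [Option.getD_some, Option.getD_none, zero_add]
      have hne : ∀ s' : ℕ, s' < 4 → s' ≠ s → zof d k r c ≠ ((s' : ℕ) : ZMod n) := by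
        intro s' h1 h2 he
        exact h2 (hnc s' s (by omega) (by omega) (he.symm.trans hz))
      rw [Finset.sum_range_succ, Finset.sum_range_succ, Finset.sum_range_succ,
        Finset.sum_range_one]
      interval_cases s
      · rw [if_pos hz, if_neg (hne 1 (by omega) (by omega)),
          if_neg (hne 2 (by omega) (by omega)), if_neg (hne 3 (by omega) (by omega))]; ring
      · rw [if_pos hz, if_neg (hne 0 (by omega) (by omega)),
          if_neg (hne 2 (by omega) (by omega)), if_neg (hne 3 (by omega) (by omega))]; ring
      · rw [if_pos hz, if_neg (hne 0 (by omega) (by omega)),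
          if_neg (hne 1 (by omega) (by omega)), if_neg (hne 3 (by omega) (by omega))]; ring
      · rw [if_pos hz, if_neg (hne 0 (by omega) (by omega)),
          if_neg (hne 1 (by omega) (by omega)), if_neg (hne 2 (by omega) (by omega))]; ring
    · push_neg at h
      rw [hBA r c (fun s hs hz => h s hs hz)]
      have hz : ∀ s ∈ Finset.range 4,
          (if zof d k r c = ((s:ℕ):ZMod n) then wv n M ε s (castF r) else 0) = 0 := by
        intro s hs
        rw [if_neg (h s (Finset.mem_range.1 hs))]
      rw [Finset.sum_eq_zero hz]; ring
  -- row sums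
  have hrowB : ∀ r, rowSum B r = 0 := by
    intro r
    have e1 : rowSum B r = rowSum A r + ∑ c : Fin n, ∑ s ∈ Finset.range 4,
        (if zof d k r c = ((s:ℕ) : ZMod n) then wv n M ε s (castF r) else 0) := by
      rw [rowSum, rowSum, ← Finset.sum_add_distrib]
      exact Finset.sum_congr rfl fun c _ => hpt r c
    rw [e1, hA.2.2.1 r, zero_add, Finset.sum_comm]
    have e2 : ∀ s ∈ Finset.range 4, (∑ c : Fin n,
        (if zof d k r c = ((s:ℕ) : ZMod n) then wv n M ε s (castF r) else 0))
        = wv n M ε s (castF r) := by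
      intro s _
      have key : ∀ c : Fin n, (zof d k r c = ((s:ℕ) : ZMod n)) ↔
          c = vfin (castF r - d - (k : ZMod n) - ((s:ℕ) : ZMod n)) := by
        intro c
        constructor
        · intro hz
          apply hcF
          rw [hvf]
          simp only [zof] at hz
          linear_combination -hz
        · rintro rfl
          simp only [zof, hvf]
          ring
      calc (∑ c : Fin n,
            (if zof d k r c = ((s:ℕ) : ZMod n) then wv n M ε s (castF r) else 0))
          = ∑ c : Fin n, (if c = vfin (castF r - d - (k:ZMod n) - ((s:ℕ):ZMod n))
              then wv n M ε s (castF r) else 0) :=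
            Finset.sum_congr rfl fun c _ => by rw [if_congr (key c) rfl rfl]
        _ = wv n M ε s (castF r) := by
            rw [Finset.sum_ite_eq' Finset.univ _ (fun _ => wv n M ε s (castF r)),
              if_pos (Finset.mem_univ _)]
    rw [Finset.sum_congr rfl e2, Finset.sum_range_succ, Finset.sum_range_succ,
      Finset.sum_range_succ, Finset.sum_range_one]
    simp only [wv]
    norm_num
    ring
  -- column sums
  have hcolB : ∀ c, colSum B c = 0 := by
    intro c
    have e1 : colSum B c = colSum A c + ∑ r : Fin n, ∑ s ∈ Finset.range 4,
        (if zof d k r c = ((s:ℕ) : ZMod n) then wv n M ε s (castF r) else 0) := by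
      rw [colSum, colSum, ← Finset.sum_add_distrib]
      exact Finset.sum_congr rfl fun r _ => hpt r c
    rw [e1, hA.2.2.2.1 c, zero_add, Finset.sum_comm]
    have e2 : ∀ s ∈ Finset.range 4, (∑ r : Fin n,
        (if zof d k r c = ((s:ℕ) : ZMod n) then wv n M ε s (castF r) else 0))
        = wv n M ε s (castF c + d + (k : ZMod n) + ((s:ℕ) : ZMod n)) := by
      intro s _
      have key : ∀ r : Fin n, (zof d k r c = ((s:ℕ) : ZMod n)) ↔
          r = vfin (castF c + d + (k : ZMod n) + ((s:ℕ) : ZMod n)) := by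
        intro r
        constructor
        · intro hz
          apply hcF
          rw [hvf]
          simp only [zof] at hz
          linear_combination hz
        · rintro rfl
          simp only [zof, hvf]
          ring
      calc (∑ r : Fin n,
            (if zof d k r c = ((s:ℕ) : ZMod n) then wv n M ε s (castF r) else 0))
          = ∑ r : Fin n, (if r = vfin (castF c + d + (k:ZMod n) + ((s:ℕ):ZMod n))
              then wv n M ε s (castF r) else 0) :=
            Finset.sum_congr rfl fun r _ => by rw [if_congr (key r) rfl rfl]
        _ = wv n M ε s (castF c + d + (k : ZMod n) + ((s:ℕ) : ZMod n)) := by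
            rw [Finset.sum_ite_eq' Finset.univ _ (fun r => wv n M ε s (castF r)),
              if_pos (Finset.mem_univ _), hvf]
    rw [Finset.sum_congr rfl e2, Finset.sum_range_succ, Finset.sum_range_succ,
      Finset.sum_range_succ, Finset.sum_range_one]
    have ha1 : castF c + d + (k : ZMod n) + 1 - 1
        = castF c + d + (k : ZMod n) := by ring
    have ha3 : castF c + d + (k : ZMod n) + 3 - 1
        = castF c + d + (k : ZMod n) + 2 := by ring
    simp only [wv]
    norm_num
    rw [ha3]
    try rw [ha1]
    ring
  -- counts
  obtain ⟨S, hS⟩ : ∃ S : Finset (ZMod n),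
      S = (Finset.range (k+4)).image (fun j : ℕ => d + (j : ZMod n)) := ⟨_, rfl⟩
  have hScard : S.card = k + 4 := by
    have hinj : Set.InjOn (fun j : ℕ => d + (j : ZMod n)) (Finset.range (k+4)) := by
      intro a ha b hb h
      rw [Finset.coe_range, Set.mem_Iio] at ha hb
      exact hnc a b (by omega) (by omega) (add_left_cancel h)
    rw [hS, Finset.card_image_of_injOn hinj, Finset.card_range]
  have hmem : ∀ v : ZMod n, v ∈ S ↔ ∃ j : ℕ, j < k + 4 ∧ v = d + (j : ZMod n) := by
    intro v; rw [hS]; simp only [Finset.mem_image, Finset.mem_range]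
    constructor
    · rintro ⟨j, hj, rfl⟩; exact ⟨j, hj, rfl⟩
    · rintro ⟨j, hj, rfl⟩; exact ⟨j, hj, rfl⟩
  have hrowF : ∀ r, rowFilled B r = k + 4 := by
    intro r
    have e : (Finset.univ.filter fun c => (B r c).isSome) =
        (Finset.univ.filter fun c : Fin n => castF r - castF c ∈ S) := by
      ext c
      simp only [Finset.mem_filter, Finset.mem_univ, true_and]
      rw [hmem]
      constructor
      · intro hsome
        obtain ⟨j, hj, he⟩ := (hskel r c).1 hsome
        exact ⟨j, hj, he⟩
      · rintro ⟨j, hj, he⟩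
        exact (hskel r c).2 ⟨j, hj, he⟩
    rw [rowFilled, e, card_filter_eq (fun c : Fin n => castF r - castF c) ?_ S, hScard]
    intro c c' h
    exact hcF c c' (by linear_combination -h)
  have hcolF : ∀ c, colFilled B c = k + 4 := by
    intro c
    have e : (Finset.univ.filter fun r => (B r c).isSome) =
        (Finset.univ.filter fun r : Fin n => castF r - castF c ∈ S) := by
      ext r
      simp only [Finset.mem_filter, Finset.mem_univ, true_and]
      rw [hmem]
      constructor
      · intro hsome
        obtain ⟨j, hj, he⟩ := (hskel r c).1 hsome
        exact ⟨j, hj, he⟩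
      · rintro ⟨j, hj, he⟩
        exact (hskel r c).2 ⟨j, hj, he⟩
    rw [colFilled, e, card_filter_eq (fun r : Fin n => castF r - castF c) ?_ S, hScard]
    intro r r' h
    exact hcF r r' (by linear_combination h)
  -- bounds
  have hkpos : ∀ (r c : Fin n) (x : ℤ), A r c = some x → 0 < k := by
    intro r c x hx
    have h1 := hA.1 r
    have h2 : 0 < rowFilled A r := by
      rw [rowFilled]
      apply Finset.card_pos.2
      exact ⟨c, Finset.mem_filter.2 ⟨Finset.mem_univ _, by rw [hx]; rfl⟩⟩
    omega
  have hbound : ∀ (r c : Fin n) (x : ℤ), B r c = some x →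
      1 ≤ x.natAbs ∧ x.natAbs ≤ M + (4 * n + 2) ∧ ¬ (2 * n + 1 ∣ x.natAbs) := by
    intro r c x hx
    by_cases h : ∃ s, s < 4 ∧ zof d k r c = ((s:ℕ) : ZMod n)
    · obtain ⟨s, hs, hz⟩ := h
      have hxv : x = wv n M ε s (castF r) := Option.some.inj (hx.symm.trans (hBs r c s hs hz))
      have he := wv_natAbs n M ε s hs (castF r)
      have hivb : (argw s (castF r)).val + 1 ≤ n := by
        have := (argw s (castF r)).val_lt; omega
      have hbk1 : 1 ≤ bks n ε s + ((argw s (castF r)).val + 1) := by omega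
      have hbk2 : bks n ε s + ((argw s (castF r)).val + 1) ≤ 4 * n + 2 := by
        interval_cases s <;> simp [bks] <;> omega
      refine ⟨by rw [hxv, he]; omega, by rw [hxv, he]; omega, ?_⟩
      rw [hxv, he, add_assoc, hDvd _ hbk1 hbk2]
      push_neg
      constructor <;> (interval_cases s <;> rcases hε with h' | h' <;> subst h' <;>
        simp [bks] <;> omega)
    · push_neg at h
      have hBA' := hBA r c h
      rw [hx] at hBA'
      have hAx : A r c = some x := hBA'.symm
      have hk0 : 0 < k := hkpos r c x hAx
      obtain ⟨e1, e2, e3⟩ := hA.2.2.2.2.1 r c x hAx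
      rw [hPk (by omega)] at e3
      rw [← hMdef] at e2
      exact ⟨e1, by omega, e3⟩
  -- coverage
  have hcov6 : ∀ x : ℕ, 1 ≤ x → x ≤ M + (4 * n + 2) → ¬ (2 * n + 1 ∣ x) →
      ∃! p : Fin n × Fin n, B p.1 p.2 = some (x : ℤ) ∨ B p.1 p.2 = some (-(x : ℤ)) := by
    intro x hx1 hx2 hx3
    rcases le_or_gt x M with hxM | hxM
    · -- old value
      have hk0 : k ≠ 0 := by
        intro hk
        rw [hk] at hMdef
        simp at hMdef
        omega
      obtain ⟨p, hp, hup⟩ := hA.2.2.2.2.2 x hx1 (by rw [← hMdef]; exact hxM)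
        (by rw [hPk hk0]; exact hx3)
      have hpB : B p.1 p.2 = A p.1 p.2 := by
        apply hBA
        intro s hs hz
        have h0 : A p.1 p.2 = none := hAnone _ _ ⟨s, hs, hz⟩
        rcases hp with h | h <;> rw [h0] at h <;> exact absurd h (by simp)
      refine ⟨p, ?_, ?_⟩
      · show B p.1 p.2 = some (x:ℤ) ∨ B p.1 p.2 = some (-(x:ℤ))
        rw [hpB]; exact hp
      rintro q hq
      by_cases hqn : ∃ s, s < 4 ∧ zof d k q.1 q.2 = ((s:ℕ) : ZMod n)
      · exfalso
        obtain ⟨s, hs, hz⟩ := hqn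
        have hBq := hBs q.1 q.2 s hs hz
        have hxa : (wv n M ε s (castF q.1)).natAbs = x := by
          rcases hq with h | h
          · have h2 := Option.some.inj ((hBq.symm).trans h)
            rw [h2, Int.natAbs_natCast]
          · have h2 := Option.some.inj ((hBq.symm).trans h)
            rw [h2, Int.natAbs_neg, Int.natAbs_natCast]
        rw [wv_natAbs n M ε s hs] at hxa
        omega
      · push_neg at hqn
        exact hup q (by rwa [hBA q.1 q.2 hqn] at hq)
    · -- new value
      have hnd := hDvd (x - M) (by omega) (by omega)
      have hxeq : M + (x - M) = x := by omega
      rw [hxeq] at hnd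
      have hne12 : ¬(ε * n + (x - M) = 2 * n + 1 ∨ ε * n + (x - M) = 2 * (2 * n + 1)) :=
        fun hh => hx3 (hnd.2 hh)
      push_neg at hne12
      obtain ⟨s, i, hs, hi1, hi2, ht⟩ := hCov (x - M) (by omega) (by omega) hne12.1 hne12.2
      obtain ⟨a, hav⟩ : ∃ a : ZMod n, a.val = i - 1 :=
        ⟨((i - 1 : ℕ) : ZMod n), ZMod.val_natCast_of_lt (by omega)⟩
      obtain ⟨y, hy⟩ : ∃ y : ZMod n, y = if s = 0 ∨ s = 2 then a else a + 1 := ⟨_, rfl⟩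
      have hay : argw s y = a := by
        rw [argw, hy]
        by_cases hc : s = 0 ∨ s = 2
        · rw [if_pos hc, if_pos hc]
        · rw [if_neg hc, if_neg hc, add_sub_cancel_right]
      obtain ⟨r0, hr0⟩ : ∃ r0 : Fin n, castF r0 = y := ⟨vfin y, hvf y⟩
      obtain ⟨c0, hc0⟩ : ∃ c0 : Fin n,
          castF c0 = y - d - (k:ZMod n) - ((s:ℕ):ZMod n) := ⟨vfin _, hvf _⟩
      have hzp : zof d k r0 c0 = ((s:ℕ) : ZMod n) := by
        simp only [zof, hr0, hc0]; ring
      have hBp := hBs r0 c0 s hs hzp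
      have habs0 : (wv n M ε s (castF r0)).natAbs = x := by
        rw [wv_natAbs n M ε s hs, hr0, hay, hav]
        omega
      have hvalp : wv n M ε s (castF r0) = (x:ℤ) ∨ wv n M ε s (castF r0) = -(x:ℤ) := by
        rcases Int.natAbs_eq (wv n M ε s (castF r0)) with h | h
        · left; rw [h, habs0]
        · right; rw [h, habs0]
      refine ⟨(r0, c0), ?_, ?_⟩
      · rcases hvalp with h | h
        · left; rw [hBp, h]
        · right; rw [hBp, h]
      · rintro ⟨q1, q2⟩ hq
        by_cases hqn : ∃ s', s' < 4 ∧ zof d k q1 q2 = ((s':ℕ) : ZMod n)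
        · obtain ⟨s', hs', hz'⟩ := hqn
          have hBq := hBs q1 q2 s' hs' hz'
          have hxa : (wv n M ε s' (castF q1)).natAbs = x := by
            rcases hq with h | h
            · have h2 := Option.some.inj ((hBq.symm).trans h)
              rw [h2, Int.natAbs_natCast]
            · have h2 := Option.some.inj ((hBq.symm).trans h)
              rw [h2, Int.natAbs_neg, Int.natAbs_natCast]
          rw [wv_natAbs n M ε s' hs'] at hxa
          have hivb := (argw s' (castF q1)).val_lt
          obtain ⟨rfl, hieq⟩ := hUniq s' s ((argw s' (castF q1)).val + 1) i hs' hs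
            (by omega) (by omega) hi1 hi2 (by omega)
          have hargeq : argw s' (castF q1) = a := by
            apply ZMod.val_injective
            rw [hav]; omega
          have hq1 : castF q1 = y := by
            rw [hy]
            by_cases hc : s' = 0 ∨ s' = 2
            · rw [if_pos hc]
              rw [argw, if_pos hc] at hargeq; exact hargeq
            · rw [if_neg hc]
              rw [argw, if_neg hc] at hargeq
              linear_combination hargeq
          have hq1' : q1 = r0 := hcF _ _ (by rw [hq1, hr0])
          have hq2' : q2 = c0 := by
            apply hcF
            rw [hc0]
            simp only [zof] at hz'
            rw [hq1] at hz'
            linear_combination -hz'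
          rw [hq1', hq2']
        · exfalso
          push_neg at hqn
          have hBAq := hBA q1 q2 hqn
          rw [hBAq] at hq
          rcases hq with h | h
          · have h2 := (hA.2.2.2.2.1 q1 q2 _ h).2.1
            rw [Int.natAbs_natCast] at h2
            rw [← hMdef] at h2
            omega
          · have h2 := (hA.2.2.2.2.1 q1 q2 _ h).2.1
            rw [Int.natAbs_neg, Int.natAbs_natCast] at h2
            rw [← hMdef] at h2
            omega
  -- assemble
  refine ⟨B, ⟨hrowF, hcolF, hrowB, hcolB, ?_, ?_⟩, ⟨d, fun r c => hskel r c⟩⟩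
  · intro i j x hx
    obtain ⟨e1, e2, e3⟩ := hbound i j x hx
    refine ⟨e1, ?_, ?_⟩
    · rw [hHn]; exact e2
    · rw [hPk4]; exact e3
  · intro x h1 h2 h3
    rw [hHn] at h2
    rw [hPk4] at h3
    exact hcov6 x h1 h2 h3
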